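/- Consider the semi-discrete elasto-acoustic system in algebraic form: real matrices M₁, M₂, M₃, A_e of size n×n and M_a, A_a of size m×m, and a coupling matrix C_e of size n×m, with M₁, M₃, A_e, M_a, A_a symmetric; twice differentiable functions U : [0,T] → ℝⁿ and Φ : [0,T] → ℝᵐ satisfy M₁ Ü(t) + M₂ U̇(t) + (M₃ + A_e) U(t) + C_e Φ̇(t) = 0 and M_a Φ̈(t) + A_a Φ(t) − C_eᵀ U̇(t) = 0 for all t ∈ [0,T]. Define the energy E(t) = U̇(t)ᵀM₁U̇(t) + U(t)ᵀM₃U(t) + U(t)ᵀA_eU(t) + Φ̇(t)ᵀM_aΦ̇(t) + Φ(t)ᵀA_aΦ(t). If M₂ is positive semidefinite, then E is nonincreasing on [0,T]; in particular E(t) ≤ E(0) for all t ∈ [0,T]. -/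

import Mathlib

open Set Matrix

private lemma hasDerivAt_quad {n m : ℕ} (A : Matrix (Fin n) (Fin m) ℝ)
    {f : ℝ → Fin n → ℝ} {f' : Fin n → ℝ} {g : ℝ → Fin m → ℝ} {g' : Fin m → ℝ} {t : ℝ}
    (hf : HasDerivAt f f' t) (hg : HasDerivAt g g' t) :
    HasDerivAt (fun s => f s ⬝ᵥ (A *ᵥ g s))
      (f' ⬝ᵥ (A *ᵥ g t) + f t ⬝ᵥ (A *ᵥ g')) t := by
  have hfi := hasDerivAt_pi.mp hf
  have hgi := hasDerivAt_pi.mp hg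
  simp only [dotProduct, mulVec]
  have : HasDerivAt (fun s => ∑ i, f s i * ∑ j, A i j * g s j)
      (∑ i, (f' i * (∑ j, A i j * g t j) + f t i * ∑ j, A i j * g' j)) t := by
    refine HasDerivAt.fun_sum fun i _ => ?_
    exact (hfi i).mul (HasDerivAt.fun_sum fun j _ => (hgi j).const_mul (A i j))
  simpa [Finset.sum_add_distrib] using this

private lemma dot_symm {k : ℕ} {M : Matrix (Fin k) (Fin k) ℝ} (hM : M.IsSymm)
    (x y : Fin k → ℝ) : x ⬝ᵥ (M *ᵥ y) = y ⬝ᵥ (M *ᵥ x) := by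
  rw [dotProduct_mulVec, dotProduct_comm]
  conv_rhs => rw [← hM, mulVec_transpose]

/-- With zero external loads and a positive semidefinite damping
matrix `M₂`, the discrete energy
`E(t) = U̇ᵀM₁U̇ + UᵀM₃U + UᵀA_eU + Φ̇ᵀM_aΦ̇ + ΦᵀA_aΦ`
of the semi-discrete elasto-acoustic system is nonincreasing on `[0,T]`;
in particular `E(t) ≤ E(0)` for all `t ∈ [0,T]`. -/
theorem semidiscrete_energy_dissipation
    {n m : ℕ} (T : ℝ) (hT : 0 < T)
    (M₁ M₂ M₃ Ae : Matrix (Fin n) (Fin n) ℝ)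
    (Ma Aa : Matrix (Fin m) (Fin m) ℝ)
    (Ce : Matrix (Fin n) (Fin m) ℝ)
    (hM₁ : M₁.IsSymm) (hM₃ : M₃.IsSymm) (hAe : Ae.IsSymm)
    (hMa : Ma.IsSymm) (hAa : Aa.IsSymm)
    (hM₂psd : ∀ x : Fin n → ℝ, 0 ≤ x ⬝ᵥ (M₂ *ᵥ x))
    (U U' U'' : ℝ → Fin n → ℝ) (Φ Φ' Φ'' : ℝ → Fin m → ℝ)
    (hU' : ∀ t ∈ Icc (0 : ℝ) T, HasDerivAt U (U' t) t)
    (hU'' : ∀ t ∈ Icc (0 : ℝ) T, HasDerivAt U' (U'' t) t)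
    (hΦ' : ∀ t ∈ Icc (0 : ℝ) T, HasDerivAt Φ (Φ' t) t)
    (hΦ'' : ∀ t ∈ Icc (0 : ℝ) T, HasDerivAt Φ' (Φ'' t) t)
    (hode₁ : ∀ t ∈ Icc (0 : ℝ) T,
      M₁ *ᵥ U'' t + M₂ *ᵥ U' t + (M₃ + Ae) *ᵥ U t + Ce *ᵥ Φ' t = 0)
    (hode₂ : ∀ t ∈ Icc (0 : ℝ) T,
      Ma *ᵥ Φ'' t + Aa *ᵥ Φ t - Ceᵀ *ᵥ U' t = 0) :
    AntitoneOn
      (fun s => U' s ⬝ᵥ (M₁ *ᵥ U' s) + U s ⬝ᵥ (M₃ *ᵥ U s) + U s ⬝ᵥ (Ae *ᵥ U s)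
        + Φ' s ⬝ᵥ (Ma *ᵥ Φ' s) + Φ s ⬝ᵥ (Aa *ᵥ Φ s)) (Icc (0 : ℝ) T) ∧
    ∀ t ∈ Icc (0 : ℝ) T,
      U' t ⬝ᵥ (M₁ *ᵥ U' t) + U t ⬝ᵥ (M₃ *ᵥ U t) + U t ⬝ᵥ (Ae *ᵥ U t)
        + Φ' t ⬝ᵥ (Ma *ᵥ Φ' t) + Φ t ⬝ᵥ (Aa *ᵥ Φ t)
      ≤ U' 0 ⬝ᵥ (M₁ *ᵥ U' 0) + U 0 ⬝ᵥ (M₃ *ᵥ U 0) + U 0 ⬝ᵥ (Ae *ᵥ U 0)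
        + Φ' 0 ⬝ᵥ (Ma *ᵥ Φ' 0) + Φ 0 ⬝ᵥ (Aa *ᵥ Φ 0) := by
  set E : ℝ → ℝ := fun s => U' s ⬝ᵥ (M₁ *ᵥ U' s) + U s ⬝ᵥ (M₃ *ᵥ U s)
    + U s ⬝ᵥ (Ae *ᵥ U s) + Φ' s ⬝ᵥ (Ma *ᵥ Φ' s) + Φ s ⬝ᵥ (Aa *ᵥ Φ s) with hE
  -- derivative of E at each t ∈ Icc
  have hDeriv : ∀ t ∈ Icc (0 : ℝ) T,
      HasDerivAt E (-(2 * (U' t ⬝ᵥ (M₂ *ᵥ U' t)))) t := by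
    intro t ht
    have h1 := hasDerivAt_quad M₁ (hU'' t ht) (hU'' t ht)
    have h2 := hasDerivAt_quad M₃ (hU' t ht) (hU' t ht)
    have h3 := hasDerivAt_quad Ae (hU' t ht) (hU' t ht)
    have h4 := hasDerivAt_quad Ma (hΦ'' t ht) (hΦ'' t ht)
    have h5 := hasDerivAt_quad Aa (hΦ' t ht) (hΦ' t ht)
    have hsum := (((h1.add h2).add h3).add h4).add h5
    -- the raw derivative value
    have key : U'' t ⬝ᵥ (M₁ *ᵥ U' t) + U' t ⬝ᵥ (M₁ *ᵥ U'' t)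
        + (U' t ⬝ᵥ (M₃ *ᵥ U t) + U t ⬝ᵥ (M₃ *ᵥ U' t))
        + (U' t ⬝ᵥ (Ae *ᵥ U t) + U t ⬝ᵥ (Ae *ᵥ U' t))
        + (Φ'' t ⬝ᵥ (Ma *ᵥ Φ' t) + Φ' t ⬝ᵥ (Ma *ᵥ Φ'' t))
        + (Φ' t ⬝ᵥ (Aa *ᵥ Φ t) + Φ t ⬝ᵥ (Aa *ᵥ Φ' t))
        = -(2 * (U' t ⬝ᵥ (M₂ *ᵥ U' t))) := by
      have e1 : U'' t ⬝ᵥ (M₁ *ᵥ U' t) = U' t ⬝ᵥ (M₁ *ᵥ U'' t) := dot_symm hM₁ _ _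
      have e2 : U t ⬝ᵥ (M₃ *ᵥ U' t) = U' t ⬝ᵥ (M₃ *ᵥ U t) := dot_symm hM₃ _ _
      have e3 : U t ⬝ᵥ (Ae *ᵥ U' t) = U' t ⬝ᵥ (Ae *ᵥ U t) := dot_symm hAe _ _
      have e4 : Φ'' t ⬝ᵥ (Ma *ᵥ Φ' t) = Φ' t ⬝ᵥ (Ma *ᵥ Φ'' t) := dot_symm hMa _ _
      have e5 : Φ t ⬝ᵥ (Aa *ᵥ Φ' t) = Φ' t ⬝ᵥ (Aa *ᵥ Φ t) := dot_symm hAa _ _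
      have o1 : U' t ⬝ᵥ (M₁ *ᵥ U'' t + M₂ *ᵥ U' t + (M₃ + Ae) *ᵥ U t + Ce *ᵥ Φ' t)
          = 0 := by rw [hode₁ t ht, dotProduct_zero]
      have o2 : Φ' t ⬝ᵥ (Ma *ᵥ Φ'' t + Aa *ᵥ Φ t - Ceᵀ *ᵥ U' t) = 0 := by
        rw [hode₂ t ht, dotProduct_zero]
      have coup : Φ' t ⬝ᵥ (Ceᵀ *ᵥ U' t) = U' t ⬝ᵥ (Ce *ᵥ Φ' t) := by
        rw [dotProduct_mulVec, dotProduct_comm, vecMul_transpose]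
      simp only [dotProduct_add, dotProduct_sub, add_mulVec, coup] at o1 o2
      rw [e1, e2, e3, e4, e5]
      nlinarith [o1, o2]
    rw [key] at hsum
    exact hsum
  have hCont : ContinuousOn E (Icc (0 : ℝ) T) := fun t ht =>
    (hDeriv t ht).continuousAt.continuousWithinAt
  have hAnti : AntitoneOn E (Icc (0 : ℝ) T) := by
    apply antitoneOn_of_deriv_nonpos (convex_Icc 0 T) hCont
    · intro t ht
      rw [interior_Icc] at ht
      exact (hDeriv t (Ioo_subset_Icc_self ht)).differentiableAt.differentiableWithinAt
    · intro t ht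
      rw [interior_Icc] at ht
      rw [(hDeriv t (Ioo_subset_Icc_self ht)).deriv]
      have := hM₂psd (U' t)
      linarith
  refine ⟨hAnti, fun t ht => hAnti (left_mem_Icc.mpr hT.le) ht ht.1⟩
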